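/- Conversely, any pair of 2×2 complex matrices B₀ (with eigenvalues 0, 1−γ), B₁ (with eigenvalues 0, γ−α−β−1) satisfying B₀ + B₁ = diag(−α,−β), where α ≠ β, γ ≠ 1, γ−α−β−1 ≠ 0, and B₀ has nonzero (1,2)-entry, is of the form given in Lemma A4 for some r₁ ≠ 0. -/

import Mathlib

open Matrix

/-- Lemma A4 (converse part): any pair `B₀` (eigenvalues `0, 1−γ`), `B₁` (eigenvalues
`0, γ−α−β−1`) with `B₀ + B₁ = diag(−α,−β)`, `α ≠ β`, `γ ≠ 1`, `γ−α−β−1 ≠ 0` and nonzero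
`(1,2)`-entry of `B₀`, is of the explicit form of Lemma A4 for some `r₁ ≠ 0`. -/
theorem stmt_9 (α β γ : ℂ) (hαβ : α ≠ β) (hγ : γ ≠ 1) (hγ' : γ - α - β - 1 ≠ 0)
    (B₀ B₁ : Matrix (Fin 2) (Fin 2) ℂ)
    (ht0 : B₀.trace = 1 - γ) (hd0 : B₀.det = 0)
    (ht1 : B₁.trace = γ - α - β - 1) (hd1 : B₁.det = 0)
    (hsum : B₀ + B₁ = Matrix.diagonal ![-α, -β])
    (h12 : B₀ 0 1 ≠ 0) :
    ∃ r₁ : ℂ, r₁ ≠ 0 ∧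
      B₀ = !![α * (β + 1 - γ) / (α - β), r₁;
              α * β * (β + 1 - γ) * (γ - 1 - α) / ((α - β) ^ 2 * r₁),
              β * (γ - α - 1) / (α - β)] ∧
      B₁ = Matrix.diagonal ![-α, -β] - B₀ := by
  have hab : α - β ≠ 0 := sub_ne_zero.mpr hαβ
  have hB1 : B₁ = Matrix.diagonal ![-α, -β] - B₀ := by
    rw [← hsum]; abel
  set a := B₀ 0 0 with ha
  set b := B₀ 0 1 with hb
  set c := B₀ 1 0 with hc
  set d := B₀ 1 1 with hd
  have htr : a + d = 1 - γ := by
    rw [Matrix.trace_fin_two] at ht0; exact ht0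
  have hdet : a * d - b * c = 0 := by
    rw [Matrix.det_fin_two] at hd0; exact hd0
  have hd1' : (-α - a) * (-β - d) - (-b) * (-c) = 0 := by
    rw [hB1, Matrix.det_fin_two] at hd1
    simpa [Matrix.sub_apply, Matrix.diagonal] using hd1
  have hE : α * d + β * a + α * β = 0 := by linear_combination hd1' - hdet
  have ea : a * (α - β) = α * (β + 1 - γ) := by linear_combination α * htr - hE
  have ed : d * (α - β) = β * (γ - 1 - α) := by linear_combination (-β) * htr + hE
  refine ⟨b, h12, ?_, hB1⟩
  ext i j
  fin_cases i <;> fin_cases j <;>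
    simp only [Matrix.cons_val', Matrix.cons_val_zero, Matrix.cons_val_one, Matrix.head_cons,
      Matrix.empty_val', Matrix.cons_val_fin_one, Matrix.head_fin_const, Matrix.of_apply,
      Fin.isValue, ← ha, ← hb, ← hc, ← hd]
  · simp only [Fin.zero_eta, Fin.mk_one, Matrix.cons_val_zero, Matrix.cons_val_one, Matrix.head_cons, ← ha, ← hb, ← hc, ← hd]
    field_simp
    linear_combination ea
  · rfl
  · simp only [Fin.zero_eta, Fin.mk_one, Matrix.cons_val_zero, Matrix.cons_val_one, Matrix.head_cons, ← ha, ← hb, ← hc, ← hd]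
    field_simp
    linear_combination -(α-β)^2 * hdet + d*(α-β)*ea + α*(β+1-γ)*ed
  · simp only [Fin.zero_eta, Fin.mk_one, Matrix.cons_val_zero, Matrix.cons_val_one, Matrix.head_cons, ← ha, ← hb, ← hc, ← hd]
    field_simp
    linear_combination ed
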